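/- Let p be a prime. Then φ(p-1) ≤ Σ_{e | p-1} e · T(e,p) ≤ Σ_{e | p-1} e · φ((p-1)/e) ≤ (p-1) · d(p-1), where d(n) is the number of divisors of n. -/

import Mathlib

open scoped Classical

/-- `T e p` is the number of `h ∈ {1,…,p-1}` with `gcd(h, p-1) = e` which are `e`-th
power residues mod `p`. -/
noncomputable def T (e p : ℕ) : ℕ :=
  ((Finset.Icc 1 (p - 1)).filter fun h =>
    Nat.gcd h (p - 1) = e ∧ ∃ y : ZMod p, (h : ZMod p) = y ^ e).card

lemma lemA (m : ℕ) (hm : 0 < m) :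
    ((Finset.Icc 1 m).filter fun k => Nat.gcd k m = 1).card = m.totient := by
  rcases eq_or_lt_of_le (show 1 ≤ m from hm) with h1 | h1
  · subst h1
    decide
  · rw [Nat.totient_eq_card_coprime]
    congr 1
    ext k
    simp only [Finset.mem_filter, Finset.mem_Icc, Finset.mem_range, Nat.Coprime]
    constructor
    · rintro ⟨⟨hk1, hk2⟩, hg⟩
      refine ⟨?_, by rwa [Nat.gcd_comm]⟩
      rcases lt_or_eq_of_le hk2 with h | h
      · exact h
      · subst h; simp [Nat.gcd_self] at hg; omega
    · rintro ⟨hk, hg⟩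
      refine ⟨⟨?_, le_of_lt hk⟩, by rwa [Nat.gcd_comm]⟩
      rcases Nat.eq_zero_or_pos k with rfl | h
      · simp [Nat.gcd_comm] at hg; omega
      · exact h

lemma lemB (n e : ℕ) (hn : 0 < n) (he : e ∣ n) :
    ((Finset.Icc 1 n).filter fun h => Nat.gcd h n = e).card
      = ((Finset.Icc 1 (n / e)).filter fun k => Nat.gcd k (n / e) = 1).card := by
  have he0 : 0 < e := by
    rcases Nat.eq_zero_or_pos e with rfl | h
    · simp at he; omega
    · exact h
  apply Finset.card_bij' (fun h _ => h / e) (fun k _ => k * e)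
  · rintro h hh
    simp only [Finset.mem_filter, Finset.mem_Icc] at hh ⊢
    obtain ⟨⟨h1, h2⟩, hg⟩ := hh
    have hdvd : e ∣ h := hg ▸ Nat.gcd_dvd_left h n
    obtain ⟨a, rfl⟩ := hdvd
    obtain ⟨b, rfl⟩ := he
    rw [Nat.mul_div_cancel_left a he0, Nat.mul_div_cancel_left b he0]
    have hgab : e * Nat.gcd a b = e := by rw [← Nat.gcd_mul_left]; exact hg
    have ha : 0 < a := by nlinarith
    refine ⟨⟨ha, Nat.le_of_mul_le_mul_left h2 he0⟩, ?_⟩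
    have := Nat.eq_of_mul_eq_mul_left he0 (hgab.trans (mul_one e).symm)
    exact this
  · rintro k hk
    simp only [Finset.mem_filter, Finset.mem_Icc] at hk ⊢
    obtain ⟨⟨k1, k2⟩, kg⟩ := hk
    obtain ⟨b, rfl⟩ := he
    rw [Nat.mul_div_cancel_left b he0] at k2 kg
    refine ⟨⟨by nlinarith, by nlinarith⟩, ?_⟩
    rw [mul_comm k e, Nat.gcd_mul_left, kg, mul_one]
  · rintro h hh
    simp only [Finset.mem_filter, Finset.mem_Icc] at hh
    obtain ⟨_, hg⟩ := hh
    have hdvd : e ∣ h := hg ▸ Nat.gcd_dvd_left h n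
    exact Nat.div_mul_cancel hdvd
  · rintro k _
    exact Nat.mul_div_cancel k he0

/-- `φ(p-1) ≤ ∑_{e ∣ p-1} e·T(e,p) ≤ ∑_{e ∣ p-1} e·φ((p-1)/e) ≤ (p-1)·d(p-1)`. -/
theorem stmt_7 (p : ℕ) (hp : p.Prime) :
    Nat.totient (p - 1) ≤ ∑ e ∈ (p - 1).divisors, e * T e p ∧
      (∑ e ∈ (p - 1).divisors, e * T e p) ≤
        ∑ e ∈ (p - 1).divisors, e * Nat.totient ((p - 1) / e) ∧
      (∑ e ∈ (p - 1).divisors, e * Nat.totient ((p - 1) / e)) ≤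
        (p - 1) * (p - 1).divisors.card := by
  set n := p - 1 with hn
  have hn0 : 0 < n := by have := hp.two_le; omega
  have hT1 : T 1 p = n.totient := by
    rw [T, ← hn, ← lemA n hn0]
    congr 1
    apply Finset.filter_congr
    intro h _
    simp only [pow_one]
    exact ⟨fun a => a.1, fun a => ⟨a, ⟨(h : ZMod p), rfl⟩⟩⟩
  refine ⟨?_, ?_, ?_⟩
  · have h1 : 1 ∈ n.divisors := Nat.one_mem_divisors.2 hn0.ne'
    calc n.totient = 1 * T 1 p := by rw [one_mul, hT1]
    _ ≤ ∑ e ∈ n.divisors, e * T e p :=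
        Finset.single_le_sum (f := fun e => e * T e p) (fun i _ => Nat.zero_le _) h1
  · apply Finset.sum_le_sum
    intro e he
    rw [Nat.mem_divisors] at he
    apply Nat.mul_le_mul_left
    rw [← lemA (n / e) (Nat.div_pos (Nat.le_of_dvd hn0 he.1) (Nat.pos_of_dvd_of_pos he.1 hn0)),
      ← lemB n e hn0 he.1]
    apply Finset.card_le_card
    intro x hx
    simp only [Finset.mem_filter, ← hn] at hx ⊢
    exact ⟨hx.1, hx.2.1⟩
  · calc (∑ e ∈ n.divisors, e * Nat.totient (n / e))
        ≤ ∑ _e ∈ n.divisors, n := by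
          apply Finset.sum_le_sum
          intro e he
          rw [Nat.mem_divisors] at he
          calc e * Nat.totient (n / e) ≤ e * (n / e) :=
                Nat.mul_le_mul_left e (Nat.totient_le _)
          _ = n := Nat.mul_div_cancel' he.1
    _ = n * n.divisors.card := by rw [Finset.sum_const, smul_eq_mul, mul_comm]
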